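/- Let m > 1 and let (Y, Z) : I → ℝ × (0,∞) be a differentiable solution on an open interval I of the planar system Y'(t) = −((m+1)/2) Y(t)² + 1 − Z(t), Z'(t) = (m−1) Y(t) Z(t), with Z(t) > 0 on I. Then the function E(t) := Z(t)^{(m+1)/(m−1)} · (2/(m+1) − Z(t)/m − Y(t)²) is constant on I. Equivalently, for each solution there is a constant K such that Y(t)² = 2/(m+1) − Z(t)/m − K·Z(t)^{−(m+1)/(m−1)} for all t ∈ I. -/

import Mathlib

open Set

private lemma first_integral_key (m u y z : ℝ) (hm0 : m ≠ 0) (hm1' : m + 1 ≠ 0)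
    (hm1 : m - 1 ≠ 0) :
    ((m + 1) / (m - 1)) * u * ((m - 1) * y * z) * (2 / (m + 1) - z / m - y ^ 2)
      + (u * z) * (0 - (m - 1) * y * z / m - 2 * y * (-((m + 1) / 2) * y ^ 2 + 1 - z)) = 0 := by
  field_simp
  ring

/-- the planar system `Y' = -((m+1)/2)Y² + 1 - Z`,
`Z' = (m-1)YZ` (the restriction of the phase-space system to `{X = 0}`) has the
first integral `E = Z^{(m+1)/(m-1)}(2/(m+1) - Z/m - Y²)`; equivalently, each
solution satisfies `Y² = 2/(m+1) - Z/m - K·Z^{-(m+1)/(m-1)}` for some constant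
`K`. -/
theorem first_integral_invariant_plane
    (m : ℝ) (hm : 1 < m) (a b : ℝ)
    (Y Z : ℝ → ℝ)
    (hY : ∀ t ∈ Ioo a b, HasDerivAt Y (-((m + 1) / 2) * Y t ^ 2 + 1 - Z t) t)
    (hZ : ∀ t ∈ Ioo a b, HasDerivAt Z ((m - 1) * Y t * Z t) t)
    (hZpos : ∀ t ∈ Ioo a b, 0 < Z t) :
    (∀ t1 ∈ Ioo a b, ∀ t2 ∈ Ioo a b,
        Z t1 ^ ((m + 1) / (m - 1)) * (2 / (m + 1) - Z t1 / m - Y t1 ^ 2)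
          = Z t2 ^ ((m + 1) / (m - 1)) * (2 / (m + 1) - Z t2 / m - Y t2 ^ 2)) ∧
    (∃ K : ℝ, ∀ t ∈ Ioo a b,
        Y t ^ 2 = 2 / (m + 1) - Z t / m - K * Z t ^ (-((m + 1) / (m - 1)))) := by
  have hm0 : m ≠ 0 := by positivity
  have hm1' : m + 1 ≠ 0 := by positivity
  have hm1 : m - 1 ≠ 0 := by intro h; linarith [sub_eq_zero.mp h]
  set α : ℝ := (m + 1) / (m - 1) with hα
  set E : ℝ → ℝ := fun t => Z t ^ α * (2 / (m + 1) - Z t / m - Y t ^ 2) with hE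
  have hEderiv : ∀ t ∈ Ioo a b, HasDerivAt E 0 t := by
    intro t ht
    have hzpos := hZpos t ht
    have hz := hZ t ht
    have hy := hY t ht
    have h1 : HasDerivAt (fun t => Z t ^ α)
        (α * Z t ^ (α - 1) * ((m - 1) * Y t * Z t)) t := by
      have := (Real.hasDerivAt_rpow_const (x := Z t) (p := α) (Or.inl hzpos.ne')).comp t hz
      simpa [Function.comp_def, mul_comm, mul_assoc, mul_left_comm] using this
    have hy2 : HasDerivAt (fun t => Y t ^ 2)
        (2 * Y t * (-((m + 1) / 2) * Y t ^ 2 + 1 - Z t)) t := by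
      simpa [Function.comp_def, mul_comm, mul_assoc] using (hasDerivAt_pow 2 (Y t)).comp t hy
    have h2 := ((hasDerivAt_const t (2 / (m + 1))).sub (hz.div_const m)).sub hy2
    have h := h1.mul h2
    convert h using 1
    · rfl
    · rfl
    · rfl
    have hrw : Z t ^ α = Z t ^ (α - 1) * Z t := by
      rw [← Real.rpow_add_one hzpos.ne']; ring_nf
    rw [hrw]
    simp only [Pi.sub_apply]
    linear_combination
      - first_integral_key m (Z t ^ (α - 1)) (Y t) (Z t) hm0 hm1' hm1
  have hconst : ∀ t1 ∈ Ioo a b, ∀ t2 ∈ Ioo a b, E t1 = E t2 := by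
    intro t1 ht1 t2 ht2
    have hdiff : DifferentiableOn ℝ E (Ioo a b) := fun t ht =>
      (hEderiv t ht).differentiableAt.differentiableWithinAt
    refine (convex_Ioo a b).is_const_of_fderivWithin_eq_zero hdiff ?_ ht1 ht2
    intro t ht
    rw [fderivWithin_of_isOpen isOpen_Ioo ht, (hEderiv t ht).hasFDerivAt.fderiv]
    ext
    simp
  refine ⟨hconst, ?_⟩
  rcases (Ioo a b).eq_empty_or_nonempty with he | ⟨t0, ht0⟩
  · exact ⟨0, fun t ht => by simp [he] at ht⟩
  · refine ⟨E t0, fun t ht => ?_⟩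
    have hEt : E t = E t0 := hconst t ht t0 ht0
    have hzpos := hZpos t ht
    have hZne : Z t ^ α ≠ 0 := (Real.rpow_pos_of_pos hzpos α).ne'
    have hkey : E t0 * Z t ^ (-α) = 2 / (m + 1) - Z t / m - Y t ^ 2 := by
      rw [← hEt, hE]
      simp only
      rw [Real.rpow_neg hzpos.le, mul_comm (Z t ^ α), mul_assoc,
        mul_inv_cancel₀ hZne, mul_one]
    linarith [hkey]
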